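/- Let m,n be positive integers and let A ∈ [0,1)^{m×n} be a matrix that is not badly approximable, i.e., liminf_{‖q‖→∞, q ∈ ℤ^n} ‖q‖^n ⟨Aq⟩^m = 0. Then there exists γ ∈ [0,1)^m such that for every decreasing ψ : ℕ → [0,∞) with ∑_{q≥1} q^{n-1} ψ(q)^m = ∞, there are infinitely many q ∈ ℤ^n with ⟨Aq − γ⟩ < ψ(‖q‖). -/

import Mathlib

open Filter

/-- The supremum norm of an integer vector, as a natural number. -/
def znn {n : ℕ} (q : Fin n → ℤ) : ℕ := Finset.univ.sup fun i => (q i).natAbs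

/-- Supremum-norm distance of `y ∈ ℝ^m` to the integer lattice `ℤ^m`. -/
noncomputable def dz {m : ℕ} (y : Fin m → ℝ) : ℝ := ⨅ p : Fin m → ℤ, ‖y - fun i => (p i : ℝ)‖

/-- `⟨Aq - γ⟩`, the approximation error. -/
noncomputable def approxErr {m n : ℕ} (A : Matrix (Fin m) (Fin n) ℝ) (γ : Fin m → ℝ)
    (q : Fin n → ℤ) : ℝ := dz (A.mulVec (fun i => (q i : ℝ)) - γ)

/-- `min_{q ∈ ℤ^n, l ≤ ‖q‖ ≤ t} ⟨Aq - γ⟩^m`. -/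
noncomputable def minErr {m n : ℕ} (A : Matrix (Fin m) (Fin n) ℝ) (γ : Fin m → ℝ)
    (l t : ℕ) : ℝ :=
  sInf {x | ∃ q : Fin n → ℤ, l ≤ znn q ∧ znn q ≤ t ∧ x = approxErr A γ q ^ m}

lemma dz_nonneg {m : ℕ} (y : Fin m → ℝ) : 0 ≤ dz y :=
  Real.iInf_nonneg fun _ => norm_nonneg _

lemma dz_le {m : ℕ} (y : Fin m → ℝ) (p : Fin m → ℤ) : dz y ≤ ‖y - fun i => (p i : ℝ)‖ :=
  ciInf_le ⟨0, fun _ ⟨_, hp'⟩ => hp' ▸ norm_nonneg _⟩ p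

lemma dz_round_le {m : ℕ} (y : Fin m → ℝ) (p : Fin m → ℤ) :
    ‖y - fun i => ((round (y i) : ℤ) : ℝ)‖ ≤ ‖y - fun i => (p i : ℝ)‖ := by
  apply pi_norm_le_iff_of_nonneg (norm_nonneg _) |>.2
  intro i
  calc ‖(y - fun i => ((round (y i) : ℤ) : ℝ)) i‖ = |y i - round (y i)| := by
        simp [Real.norm_eq_abs]
    _ ≤ |y i - p i| := round_le (y i) (p i)
    _ = ‖(y - fun i => ((p i : ℤ) : ℝ)) i‖ := by simp [Real.norm_eq_abs]
    _ ≤ _ := norm_le_pi_norm _ i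

lemma dz_eq_round {m : ℕ} (y : Fin m → ℝ) :
    dz y = ‖y - fun i => ((round (y i) : ℤ) : ℝ)‖ :=
  le_antisymm (dz_le y _) (le_ciInf fun p => dz_round_le y p)

lemma dz_add_int {m : ℕ} (y : Fin m → ℝ) (c : Fin m → ℤ) :
    dz (y + fun i => (c i : ℝ)) = dz y := by
  apply le_antisymm
  · apply le_ciInf
    intro p
    have := dz_le (y + fun i => (c i : ℝ)) (p + c)
    refine le_trans this (le_of_eq ?_)
    congr 1
    ext i; push_cast [Pi.add_apply, Pi.sub_apply]; ring
  · apply le_ciInf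
    intro p
    have := dz_le y (p - c)
    refine le_trans this (le_of_eq ?_)
    congr 1
    ext i; push_cast [Pi.add_apply, Pi.sub_apply]; ring

lemma natAbs_le_znn {n : ℕ} (q : Fin n → ℤ) (i : Fin n) : (q i).natAbs ≤ znn q :=
  Finset.le_sup (f := fun i => (q i).natAbs) (Finset.mem_univ i)

lemma znn_le {n : ℕ} (q : Fin n → ℤ) (M : ℕ) (h : ∀ i, (q i).natAbs ≤ M) : znn q ≤ M :=
  Finset.sup_le fun i _ => h i

lemma znn_sum_le {n : ℕ} (s : Finset ℕ) (f : ℕ → (Fin n → ℤ)) :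
    znn (∑ k ∈ s, f k) ≤ ∑ k ∈ s, znn (f k) := by
  apply znn_le
  intro i
  calc ((∑ k ∈ s, f k) i).natAbs = (∑ k ∈ s, f k i).natAbs := by simp
    _ ≤ ∑ k ∈ s, (f k i).natAbs := nat_abs_sum_le s _
    _ ≤ ∑ k ∈ s, znn (f k) := Finset.sum_le_sum fun k _ => natAbs_le_znn _ i

lemma exists_znn_eq {n : ℕ} (hn : 0 < n) (q : Fin n → ℤ) : ∃ i, (q i).natAbs = znn q := by
  have : Nonempty (Fin n) := ⟨⟨0, hn⟩⟩
  obtain ⟨i, _, hi⟩ := Finset.exists_mem_eq_sup Finset.univ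
    Finset.univ_nonempty fun i => (q i).natAbs
  exact ⟨i, hi.symm⟩

lemma exists_good_seq {m n : ℕ} (A : Matrix (Fin m) (Fin n) ℝ)
    (hnotbad : ∀ ε : ℝ, 0 < ε → ∀ N : ℕ, ∃ q : Fin n → ℤ,
      N ≤ znn q ∧ (znn q : ℝ) ^ n * approxErr A 0 q ^ m < ε) :
    ∃ Q : ℕ → (Fin n → ℤ),
      (∀ k, 2 * (∑ j ∈ Finset.range k, znn (Q j)) + k + 1 ≤ znn (Q k)) ∧
      (∀ k, (znn (Q k) : ℝ) ^ n * approxErr A 0 (Q k) ^ m < ((1/4 : ℝ) ^ k) ^ m) := by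
  have hc : ∀ N k : ℕ, ∃ q : Fin n → ℤ,
      N ≤ znn q ∧ (znn q : ℝ) ^ n * approxErr A 0 q ^ m < ((1/4 : ℝ) ^ k) ^ m :=
    fun N k => hnotbad _ (by positivity) N
  choose c hc1 hc2 using hc
  set W : ℕ → ((Fin n → ℤ) × ℕ) := fun k => Nat.rec
    ((c 1 0, znn (c 1 0)))
    (fun k ih => (c (2 * ih.2 + k + 2) (k+1), ih.2 + znn (c (2 * ih.2 + k + 2) (k+1)))) k
    with hWdef
  have hWs : ∀ k, W (k+1) =
      (c (2 * (W k).2 + k + 2) (k+1), (W k).2 + znn (c (2 * (W k).2 + k + 2) (k+1))) :=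
    fun k => rfl
  refine ⟨fun k => (W k).1, ?_, ?_⟩
  · have hsum : ∀ k, (W k).2 = ∑ j ∈ Finset.range (k+1), znn (W j).1 := by
      intro k
      induction k with
      | zero => simp [hWdef]
      | succ k ih =>
        rw [Finset.sum_range_succ, ← ih, hWs k]
    intro k
    cases k with
    | zero =>
      show 2 * (∑ j ∈ Finset.range 0, znn (W j).1) + 0 + 1 ≤ znn (c 1 0)
      simpa using hc1 1 0
    | succ k =>
      have h1 := hc1 (2 * (W k).2 + k + 2) (k+1)
      have e : (W (k+1)).1 = c (2 * (W k).2 + k + 2) (k+1) := by rw [hWs k]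
      show 2 * (∑ j ∈ Finset.range (k+1), znn (W j).1) + (k+1) + 1 ≤ znn (W (k+1)).1
      rw [e, ← hsum k]
      omega
  · intro k
    cases k with
    | zero =>
      show (znn (c 1 0) : ℝ) ^ n * approxErr A 0 (c 1 0) ^ m < ((1/4 : ℝ) ^ 0) ^ m
      simpa using hc2 1 0
    | succ k =>
      have h := hc2 (2 * (W k).2 + k + 2) (k+1)
      have e : (W (k+1)).1 = c (2 * (W k).2 + k + 2) (k+1) := by rw [hWs k]
      show (znn (W (k+1)).1 : ℝ) ^ n * approxErr A 0 (W (k+1)).1 ^ m < ((1/4 : ℝ) ^ (k+1)) ^ m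
      rw [e]
      exact h

set_option maxHeartbeats 2000000 in
theorem not_bad_implies_omega_fiber_nonempty (m n : ℕ) (hm : 0 < m) (hn : 0 < n)
    (A : Matrix (Fin m) (Fin n) ℝ) (hA : ∀ i j, 0 ≤ A i j ∧ A i j < 1)
    (hnotbad : ∀ ε : ℝ, 0 < ε → ∀ N : ℕ, ∃ q : Fin n → ℤ,
      N ≤ znn q ∧ (znn q : ℝ) ^ n * approxErr A 0 q ^ m < ε) :
    ∃ γ : Fin m → ℝ, (∀ i, 0 ≤ γ i ∧ γ i < 1) ∧
      ∀ ψ : ℕ → ℝ, Antitone ψ → (∀ q, 0 ≤ ψ q) →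
        ¬ Summable (fun q : ℕ => (q : ℝ) ^ (n - 1) * ψ q ^ m) →
        {q : Fin n → ℤ | approxErr A γ q < ψ (znn q)}.Infinite := by
  obtain ⟨Q, hgrow, hsmall⟩ := exists_good_seq A hnotbad
  set T : ℕ → ℕ := fun k => znn (Q k) with hTdef
  have hgrowT : ∀ k, 2 * (∑ j ∈ Finset.range k, T j) + k + 1 ≤ T k := hgrow
  have hT1 : ∀ k, 1 ≤ T k := fun k => le_trans (by omega) (hgrowT k)
  have hTmono : Monotone T := by
    apply monotone_nat_of_le_succ
    intro k
    calc T k ≤ ∑ j ∈ Finset.range (k+1), T j :=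
          Finset.single_le_sum (f := fun j => T j) (fun _ _ => Nat.zero_le _)
            (Finset.self_mem_range_succ k)
      _ ≤ T (k+1) := by have := hgrowT (k+1); omega
  set v : ℕ → (Fin m → ℝ) := fun k => A.mulVec (fun i => ((Q k i : ℝ))) with hvdef
  set δ : ℕ → ℝ := fun k => approxErr A 0 (Q k) with hδdef
  have hδ0 : ∀ k, 0 ≤ δ k := fun k => dz_nonneg _
  have hsmallT : ∀ k, (T k : ℝ) ^ n * δ k ^ m < ((1/4 : ℝ) ^ k) ^ m := hsmall
  have hδlt : ∀ k, δ k < (1/4 : ℝ) ^ k := by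
    intro k
    rw [← pow_lt_pow_iff_left₀ (hδ0 k) (by positivity) hm.ne']
    calc δ k ^ m = 1 * δ k ^ m := (one_mul _).symm
      _ ≤ (T k : ℝ) ^ n * δ k ^ m := by
          apply mul_le_mul_of_nonneg_right _ (pow_nonneg (hδ0 k) m)
          exact one_le_pow₀ (by exact_mod_cast hT1 k)
      _ < ((1/4 : ℝ) ^ k) ^ m := hsmallT k
  set r : ℕ → (Fin m → ℝ) := fun k => v k - fun i => ((round (v k i) : ℤ) : ℝ) with hrdef
  have hrd : ∀ k, ‖r k‖ = δ k := by
    intro k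
    rw [hδdef]
    show ‖r k‖ = approxErr A 0 (Q k)
    rw [approxErr, sub_zero, dz_eq_round]
  have hrnorm : Summable (fun k => ‖r k‖) := by
    apply Summable.of_nonneg_of_le (fun k => norm_nonneg _) (fun k => (hrd k ▸ (hδlt k).le))
    exact summable_geometric_of_lt_one (by norm_num) (by norm_num)
  have hr : Summable r := hrnorm.of_norm
  set γ' : Fin m → ℝ := ∑' k, r k with hγ'def
  set γ : Fin m → ℝ := fun i => Int.fract (γ' i) with hγdef
  set QQ : ℕ → (Fin n → ℤ) := fun K => ∑ k ∈ Finset.range (K+1), Q k with hQQdef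
  set τ : ℕ → ℝ := fun K => ∑' j, ‖r (j + (K+1))‖ with hτdef
  have hτ0 : ∀ K, 0 ≤ τ K := fun K => tsum_nonneg fun j => norm_nonneg _
  -- key1 : approximation quality of QQ K
  have key1 : ∀ K, approxErr A γ (QQ K) ≤ τ K := by
    intro K
    have htails : Summable (fun j => ‖r (j + (K+1))‖) :=
      (summable_nat_add_iff (K+1)).2 hrnorm
    have hV : A.mulVec (fun i => ((QQ K) i : ℝ)) = ∑ k ∈ Finset.range (K+1), v k := by
      have hVsum : (fun i => ((QQ K) i : ℝ))
          = ∑ k ∈ Finset.range (K+1), (fun i => ((Q k) i : ℝ)) := by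
        funext i
        simp only [hQQdef, Finset.sum_apply]
        push_cast
        simp
      rw [hVsum, ← Matrix.mulVecLin_apply, map_sum]
      simp only [Matrix.mulVecLin_apply, hvdef]
    have step1 : approxErr A γ (QQ K) = dz ((∑ k ∈ Finset.range (K+1), v k) - γ') := by
      rw [approxErr, hV]
      have heq : (∑ k ∈ Finset.range (K+1), v k) - γ =
          ((∑ k ∈ Finset.range (K+1), v k) - γ') + fun i => ((⌊γ' i⌋ : ℤ) : ℝ) := by
        funext i
        simp only [Pi.sub_apply, Pi.add_apply, hγdef, Int.fract]
        ring
      rw [heq, dz_add_int]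
    rw [step1]
    set P : Fin m → ℤ := ∑ k ∈ Finset.range (K+1), (fun i => round (v k i)) with hPdef
    have e1 : (fun i => ((P i : ℤ) : ℝ))
        = ∑ k ∈ Finset.range (K+1), (fun i => ((round (v k i) : ℤ) : ℝ)) := by
      funext i
      simp only [hPdef, Finset.sum_apply]
      push_cast
      rfl
    have e2 : ((∑ k ∈ Finset.range (K+1), v k) - γ') - (fun i => ((P i : ℤ) : ℝ))
        = -(∑' j, r (j + (K+1))) := by
      have htail := Summable.sum_add_tsum_nat_add (f := r) (K+1) hr
      have e3 : (∑ k ∈ Finset.range (K+1), v k) - (fun i => ((P i : ℤ) : ℝ))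
          = ∑ k ∈ Finset.range (K+1), r k := by
        rw [e1, ← Finset.sum_sub_distrib]
      calc ((∑ k ∈ Finset.range (K+1), v k) - γ') - (fun i => ((P i : ℤ) : ℝ))
          = ((∑ k ∈ Finset.range (K+1), v k) - (fun i => ((P i : ℤ) : ℝ))) - γ' := by
            abel
        _ = (∑ k ∈ Finset.range (K+1), r k) - γ' := by rw [e3]
        _ = -(∑' j, r (j + (K+1))) := by
            rw [hγ'def, ← htail]; abel
    calc dz ((∑ k ∈ Finset.range (K+1), v k) - γ')
        ≤ ‖((∑ k ∈ Finset.range (K+1), v k) - γ') - (fun i => ((P i : ℤ) : ℝ))‖ := dz_le _ P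
      _ = ‖∑' j, r (j + (K+1))‖ := by rw [e2, norm_neg]
      _ ≤ ∑' j, ‖r (j + (K+1))‖ := norm_tsum_le_tsum_norm htails
      _ = τ K := rfl
  -- key2 : the weighted tail bound
  have key2 : ∀ K, ((T (K+1) : ℝ)) ^ n * τ K ^ m ≤ (1/4 : ℝ) ^ K := by
    intro K
    have htails : Summable (fun j => ‖r (j + (K+1))‖) :=
      (summable_nat_add_iff (K+1)).2 hrnorm
    set t : ℝ := (T (K+1) : ℝ) ^ ((n : ℝ) / (m : ℝ)) with htdef
    have ht0 : 0 ≤ t := Real.rpow_nonneg (Nat.cast_nonneg _) _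
    have htm : t ^ m = (T (K+1) : ℝ) ^ n := by
      rw [htdef, ← Real.rpow_natCast ((T (K+1) : ℝ) ^ ((n : ℝ) / (m : ℝ))) m,
        ← Real.rpow_mul (Nat.cast_nonneg _), div_mul_cancel₀, Real.rpow_natCast]
      exact_mod_cast hm.ne'
    have hterm : ∀ j : ℕ, t * ‖r (j + (K+1))‖ ≤ (1/4 : ℝ) ^ (j + (K+1)) := by
      intro j
      have h1 : (t * ‖r (j + (K+1))‖) ^ m ≤ ((1/4 : ℝ) ^ (j + (K+1))) ^ m := by
        rw [mul_pow, htm, hrd]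
        calc (T (K+1) : ℝ) ^ n * δ (j + (K+1)) ^ m
            ≤ (T (j + (K+1)) : ℝ) ^ n * δ (j + (K+1)) ^ m := by
              apply mul_le_mul_of_nonneg_right _ (pow_nonneg (hδ0 _) m)
              exact pow_le_pow_left₀ (by positivity) (by exact_mod_cast hTmono (by omega)) n
          _ ≤ ((1/4 : ℝ) ^ (j + (K+1))) ^ m := (hsmallT _).le
      exact le_of_pow_le_pow_left₀ hm.ne' (by positivity) h1
    have hsum : t * τ K ≤ (1/4 : ℝ) ^ K := by
      rw [hτdef, ← tsum_mul_left]
      calc ∑' j, t * ‖r (j + (K+1))‖ ≤ ∑' j : ℕ, (1/4 : ℝ) ^ (j + (K+1)) := by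
            apply Summable.tsum_le_tsum hterm (htails.mul_left t)
            exact (summable_nat_add_iff (K+1)).2
              (summable_geometric_of_lt_one (by norm_num) (by norm_num))
        _ = (∑' j : ℕ, (1/4 : ℝ) ^ j) * (1/4 : ℝ) ^ (K+1) := by
            simp only [pow_add]
            exact tsum_mul_right
        _ = (1 - 1/4 : ℝ)⁻¹ * (1/4 : ℝ) ^ (K+1) := by
            rw [tsum_geometric_of_lt_one (by norm_num) (by norm_num)]
        _ ≤ (1/4 : ℝ) ^ K := by
            rw [pow_succ]
            rw [show ((1 : ℝ) - 1/4)⁻¹ = 4/3 by norm_num]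
            nlinarith [pow_nonneg (show (0:ℝ) ≤ 1/4 by norm_num) K]
    calc (T (K+1) : ℝ) ^ n * τ K ^ m = (t * τ K) ^ m := by rw [mul_pow, htm]
      _ ≤ ((1/4 : ℝ) ^ K) ^ m := pow_le_pow_left₀ (mul_nonneg ht0 (hτ0 K)) hsum m
      _ ≤ (1/4 : ℝ) ^ K := pow_le_of_le_one (by positivity)
          (pow_le_one₀ (by norm_num) (by norm_num)) hm.ne'
  -- norm bounds for QQ
  set b : ℕ → ℕ := fun K => znn (QQ K) with hbdef
  have hbub : ∀ K, b K ≤ ∑ k ∈ Finset.range (K+1), T k := fun K => znn_sum_le _ _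
  have hblb : ∀ K, (∑ k ∈ Finset.range K, T k) + (K+1) ≤ b K := by
    intro K
    obtain ⟨i, hi⟩ := exists_znn_eq hn (Q K)
    have h1 : T K ≤ b K + ∑ k ∈ Finset.range K, T k := by
      have e : Q K i = QQ K i - (∑ k ∈ Finset.range K, Q k) i := by
        simp [hQQdef, Finset.sum_range_succ]
      calc T K = (Q K i).natAbs := hi.symm
        _ = (QQ K i - (∑ k ∈ Finset.range K, Q k) i).natAbs := by rw [← e]
        _ ≤ (QQ K i).natAbs + ((∑ k ∈ Finset.range K, Q k) i).natAbs := Int.natAbs_sub_le _ _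
        _ ≤ b K + ∑ k ∈ Finset.range K, T k :=
            Nat.add_le_add (natAbs_le_znn _ i)
              (le_trans (natAbs_le_znn _ i) (znn_sum_le _ _))
    have h2 := hgrowT K
    omega
  have hb2T : ∀ K, b (K+1) ≤ 2 * T (K+1) := by
    intro K
    have h1 := hbub (K+1)
    have h2 := hgrowT (K+1)
    rw [Finset.sum_range_succ] at h1
    omega
  have hbmono : Monotone b := by
    apply monotone_nat_of_le_succ
    intro K
    have h1 := hbub K
    have h2 := hblb (K+1)
    omega
  have hbK : ∀ K, K + 1 ≤ b K := fun K => le_trans (by omega) (hblb K)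
  refine ⟨γ, fun i => ⟨Int.fract_nonneg _, Int.fract_lt_one _⟩, ?_⟩
  intro ψ hψanti hψ0 hψdiv
  by_contra hfin
  rw [Set.not_infinite] at hfin
  -- get a bound M on znn over the finite set
  obtain ⟨M, hM⟩ : ∃ M, ∀ q ∈ {q : Fin n → ℤ | approxErr A γ q < ψ (znn q)}, znn q ≤ M := by
    obtain ⟨M, hM⟩ := (hfin.image znn).bddAbove
    exact ⟨M, fun q hq => hM (Set.mem_image_of_mem _ hq)⟩
  have hψτ : ∀ K, M ≤ K → ψ (b K) ≤ τ K := by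
    intro K hK
    by_contra hlt
    push_neg at hlt
    have : QQ K ∈ {q : Fin n → ℤ | approxErr A γ q < ψ (znn q)} :=
      lt_of_le_of_lt (key1 K) hlt
    have h3 : b K ≤ M := hM _ this
    have := hbK K
    omega
  apply hψdiv
  set a : ℕ → ℝ := fun q => (q : ℝ) ^ (n - 1) * ψ q ^ m with hadef
  have ha0 : ∀ q, 0 ≤ a q := fun q => mul_nonneg (by positivity) (pow_nonneg (hψ0 q) m)
  have hblock : ∀ K, M ≤ K →
      ∑ q ∈ Finset.Ico (b K) (b (K+1)), a q ≤ 2 ^ n * (1/4 : ℝ) ^ K := by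
    intro K hK
    have hbound : ∀ q ∈ Finset.Ico (b K) (b (K+1)),
        a q ≤ (b (K+1) : ℝ) ^ (n - 1) * τ K ^ m := by
      intro q hq
      rw [Finset.mem_Ico] at hq
      apply mul_le_mul
      · exact pow_le_pow_left₀ (by positivity) (by exact_mod_cast hq.2.le) _
      · have h1 : ψ q ≤ τ K := le_trans (hψanti hq.1) (hψτ K hK)
        exact pow_le_pow_left₀ (hψ0 q) h1 m
      · exact pow_nonneg (hψ0 q) m
      · positivity
    calc ∑ q ∈ Finset.Ico (b K) (b (K+1)), a q
        ≤ ∑ _q ∈ Finset.Ico (b K) (b (K+1)), (b (K+1) : ℝ) ^ (n - 1) * τ K ^ m :=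
          Finset.sum_le_sum hbound
      _ = ((Finset.Ico (b K) (b (K+1))).card : ℝ) * ((b (K+1) : ℝ) ^ (n - 1) * τ K ^ m) := by
          rw [Finset.sum_const, nsmul_eq_mul]
      _ ≤ (b (K+1) : ℝ) * ((b (K+1) : ℝ) ^ (n - 1) * τ K ^ m) := by
          apply mul_le_mul_of_nonneg_right
          · rw [Nat.card_Ico]
            exact_mod_cast Nat.sub_le _ _
          · exact mul_nonneg (by positivity) (pow_nonneg (hτ0 K) m)
      _ = (b (K+1) : ℝ) ^ n * τ K ^ m := by
          rw [← mul_assoc, ← pow_succ']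
          congr 2
          omega
      _ ≤ ((2 * T (K+1) : ℕ) : ℝ) ^ n * τ K ^ m := by
          apply mul_le_mul_of_nonneg_right _ (pow_nonneg (hτ0 K) m)
          exact pow_le_pow_left₀ (by positivity) (by exact_mod_cast hb2T K) n
      _ = 2 ^ n * ((T (K+1) : ℝ) ^ n * τ K ^ m) := by
          push_cast
          rw [mul_pow]
          ring
      _ ≤ 2 ^ n * (1/4 : ℝ) ^ K := by
          exact mul_le_mul_of_nonneg_left (key2 K) (by positivity)
  have hgeo : Summable (fun j : ℕ => (1/4 : ℝ) ^ j) :=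
    summable_geometric_of_lt_one (by norm_num) (by norm_num)
  have hC : ∀ K, M ≤ K → ∑ q ∈ Finset.range (b K), a q ≤
      (∑ q ∈ Finset.range (b M), a q) + 2 ^ n * ∑ j ∈ Finset.Ico M K, (1/4 : ℝ) ^ j := by
    intro K hK
    induction K, hK using Nat.le_induction with
    | base => simp
    | succ K hK ih =>
      have hsplit : ∑ q ∈ Finset.range (b (K+1)), a q
          = ∑ q ∈ Finset.range (b K), a q + ∑ q ∈ Finset.Ico (b K) (b (K+1)), a q := by
        rw [Finset.range_eq_Ico, Finset.range_eq_Ico]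
        exact (Finset.sum_Ico_consecutive _ (Nat.zero_le _) (hbmono (Nat.le_succ K))).symm
      rw [hsplit, Finset.sum_Ico_succ_top hK, mul_add]
      have := hblock K hK
      linarith [ih]
  have hCbound : ∀ N : ℕ, ∑ q ∈ Finset.range N, a q ≤
      (∑ q ∈ Finset.range (b M), a q) + 2 ^ n * 2 := by
    intro N
    set K := max M N with hKdef
    have hNK : N ≤ K := le_max_right M N
    have hMK : M ≤ K := le_max_left M N
    have h1 : N ≤ b K := by have := hbK K; omega
    calc ∑ q ∈ Finset.range N, a q ≤ ∑ q ∈ Finset.range (b K), a q := by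
          apply Finset.sum_le_sum_of_subset_of_nonneg
            (Finset.range_subset_range.2 h1) (fun q _ _ => ha0 q)
      _ ≤ (∑ q ∈ Finset.range (b M), a q) + 2 ^ n * ∑ j ∈ Finset.Ico M K, (1/4 : ℝ) ^ j :=
          hC K hMK
      _ ≤ (∑ q ∈ Finset.range (b M), a q) + 2 ^ n * 2 := by
          have hle : ∑ j ∈ Finset.Ico M K, (1/4 : ℝ) ^ j ≤ 2 := by
            calc ∑ j ∈ Finset.Ico M K, (1/4 : ℝ) ^ j
                ≤ ∑' j : ℕ, (1/4 : ℝ) ^ j :=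
                  Summable.sum_le_tsum _ (fun j _ => by positivity) hgeo
              _ = (1 - 1/4 : ℝ)⁻¹ := tsum_geometric_of_lt_one (by norm_num) (by norm_num)
              _ ≤ 2 := by norm_num
          have h2n : (0:ℝ) ≤ 2 ^ n := by positivity
          nlinarith
  exact summable_of_sum_range_le ha0 hCbound
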